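/- arXiv:2012.12376 — 2 statements merged into one kernel-verified Lean document; each statement's English description precedes it below -/
import Mathlib

section
/- Let G be a d-regular graph on n vertices with normalized adjacency matrix AD^{-1} having eigenvalues 1 = λ_1 ≥ ... ≥ λ_n. If S ⊂ V is a stable (independent) set with |S|/n = −λ_n/(1 − λ_n) (i.e., S attains the Hoffman bound), then 𝟙_S is a linear combination of 𝟙 and an eigenvector of AD^{-1} with eigenvalue λ_n; consequently S fails to integrate the eigenspace of λ_n. -/
open Finset Matrix SimpleGraph


/-- Hoffman-bound tightness. Let `G` be a `d`-regular graph, `lam` its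
least normalized-adjacency eigenvalue, and `S` a stable set with
`|S|/n = −lam/(1 − lam)`. Then `𝟙_S` is a linear combination of `𝟙` and an
eigenvector of `A/d` with eigenvalue `lam`; consequently `S` fails to integrate the
`lam`-eigenspace (there is a `lam`-eigenvector orthogonal to `𝟙` whose sum over `S`
is nonzero). -/
theorem stmt15 {V : Type*} [Fintype V] [DecidableEq V]
    (G : SimpleGraph V) [DecidableRel G.Adj]
    (d : ℕ) (hd : G.IsRegularOfDegree d) (hd0 : 0 < d) (lam : ℝ)
    (hmin : ∀ (μ : ℝ) (ψ : V → ℝ), ψ ≠ 0 →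
      ((d : ℝ)⁻¹ • G.adjMatrix ℝ).mulVec ψ = μ • ψ → lam ≤ μ)
    (heig : ∃ ψ : V → ℝ, ψ ≠ 0 ∧
      ((d : ℝ)⁻¹ • G.adjMatrix ℝ).mulVec ψ = lam • ψ)
    (S : Finset V) (hstable : ∀ u ∈ S, ∀ v ∈ S, ¬ G.Adj u v)
    (hhoff : (S.card : ℝ) / (Fintype.card V : ℝ) = -lam / (1 - lam)) :
    (∃ (c : ℝ) (φ : V → ℝ),
        ((d : ℝ)⁻¹ • G.adjMatrix ℝ).mulVec φ = lam • φ ∧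
        ∀ x, (if x ∈ S then (1 : ℝ) else 0) = c + φ x) ∧
    ∃ φ : V → ℝ,
      ((d : ℝ)⁻¹ • G.adjMatrix ℝ).mulVec φ = lam • φ ∧
      (∑ v, φ v = 0) ∧ ∑ x ∈ S, φ x ≠ 0 := by
  classical
  obtain ⟨ψ, hψ0, -⟩ := heig
  haveI hne : Nonempty V := by
    by_contra h
    rw [not_nonempty_iff] at h
    exact hψ0 (funext fun v => (h.false v).elim)
  have hd0' : (0 : ℝ) < d := by exact_mod_cast hd0
  set A : Matrix V V ℝ := G.adjMatrix ℝ with hAdef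
  set M : Matrix V V ℝ := (d : ℝ)⁻¹ • G.adjMatrix ℝ with hMdef
  have hM : M.IsHermitian := by
    ext i j
    simp [hMdef, Matrix.conjTranspose_apply, G.adj_comm i j]
  set B : Matrix V V ℝ := M - lam • (1 : Matrix V V ℝ) with hBdef
  have hB : B.IsHermitian := by
    simp only [hBdef, Matrix.IsHermitian, Matrix.conjTranspose_sub,
      Matrix.conjTranspose_smul, Matrix.conjTranspose_one, star_trivial, hM.eq]
  have hBmul : ∀ x : V → ℝ, B *ᵥ x = M *ᵥ x - lam • x := by
    intro x
    simp [hBdef, Matrix.sub_mulVec, Matrix.smul_mulVec, Matrix.one_mulVec]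
  have hBpsd : B.PosSemidef := by
    apply hB.posSemidef_iff_eigenvalues_nonneg.mpr
    intro i
    show (0:ℝ) ≤ hB.eigenvalues i
    have hv := hB.mulVec_eigenvectorBasis i
    set v : V → ℝ := ⇑(hB.eigenvectorBasis i) with hvdef
    have hv0 : v ≠ 0 := by
      have h1 := hB.eigenvectorBasis.orthonormal.ne_zero i
      intro h
      exact h1 (by ext x; exact congrFun h x)
    have hMv : M *ᵥ v = (hB.eigenvalues i + lam) • v := by
      rw [hBmul v] at hv
      have : M *ᵥ v = hB.eigenvalues i • v + lam • v := by
        rw [← hv]; abel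
      rw [this, add_smul]
    have := hmin _ v hv0 hMv
    linarith
  have hpsd : ∀ x : V → ℝ, 0 ≤ x ⬝ᵥ (B *ᵥ x) := by
    intro x
    simpa using (Matrix.posSemidef_iff_dotProduct_mulVec.mp hBpsd).2 x
  -- lam < 0
  obtain ⟨u0, hu0⟩ : (G.neighborFinset (Classical.arbitrary V)).Nonempty := by
    rw [← Finset.card_pos]
    have := hd (Classical.arbitrary V)
    rw [SimpleGraph.degree] at this
    omega
  set v0 := Classical.arbitrary V
  have hadj : G.Adj v0 u0 := (SimpleGraph.mem_neighborFinset _ _ _).mp hu0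
  have hneq : v0 ≠ u0 := hadj.ne
  have hlam : lam < 0 := by
    set x : V → ℝ := fun w => (if w = v0 then (1:ℝ) else 0) - (if w = u0 then 1 else 0) with hxdef
    have hAx : ∀ w, (A *ᵥ x) w =
        (if v0 ∈ G.neighborFinset w then (1:ℝ) else 0)
        - (if u0 ∈ G.neighborFinset w then 1 else 0) := by
      intro w
      rw [hAdef, SimpleGraph.adjMatrix_mulVec_apply]
      simp [hxdef, Finset.sum_sub_distrib, Finset.sum_ite_eq']
    have hdot : ∀ y : V → ℝ, x ⬝ᵥ y = y v0 - y u0 := by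
      intro y
      simp [hxdef, dotProduct, sub_mul, Finset.sum_sub_distrib,
        Finset.sum_ite_eq', ite_mul]
    have hxMx : x ⬝ᵥ (M *ᵥ x) = (d:ℝ)⁻¹ * (-2) := by
      rw [hMdef, Matrix.smul_mulVec, dotProduct_smul, smul_eq_mul]
      rw [show (G.adjMatrix ℝ) = A from rfl]
      rw [hdot, hAx, hAx]
      simp only [SimpleGraph.mem_neighborFinset, hadj, hadj.symm, G.irrefl, if_true, if_false]
      ring
    have hxx : x ⬝ᵥ x = 2 := by
      rw [hdot]
      simp [hxdef, hneq, hneq.symm]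
      norm_num
    have h0 := hpsd x
    rw [hBmul, dotProduct_sub, dotProduct_smul, hxMx, hxx, smul_eq_mul] at h0
    have : (d:ℝ)⁻¹ > 0 := by positivity
    nlinarith
  -- main computation
  have hl1 : (0:ℝ) < 1 - lam := by linarith
  set n : ℝ := (Fintype.card V : ℝ) with hndef
  have hn0 : (0:ℝ) < n := by
    rw [hndef]; exact_mod_cast Fintype.card_pos
  set s : ℝ := (S.card : ℝ) with hsdef
  have hαrel : s / n = -lam / (1 - lam) := hhoff
  set α : ℝ := s / n with hαdef
  have hαn : α * n = s := by
    rw [hαdef, div_mul_cancel₀ s hn0.ne']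
  have hrel : α * (1 - lam) = -lam := by
    rw [hαrel]
    field_simp
  have hα_pos : 0 < α := by
    rw [hαrel]
    exact div_pos (by linarith) hl1
  have hα1 : α < 1 := by nlinarith [hrel]
  set χ : V → ℝ := fun x => if x ∈ S then (1:ℝ) else 0 with hχdef
  set φ : V → ℝ := fun x => χ x - α with hφdef
  have hχsum : ∑ v, χ v = s := by
    simp [hχdef, hsdef, Finset.sum_boole, Finset.filter_mem_eq_inter]
  have hL1 : χ ⬝ᵥ (A *ᵥ χ) = 0 := by
    rw [dotProduct]
    apply Finset.sum_eq_zero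
    intro v _
    by_cases hv : v ∈ S
    · have h2 : (A *ᵥ χ) v = 0 := by
        rw [hAdef, SimpleGraph.adjMatrix_mulVec_apply]
        apply Finset.sum_eq_zero
        intro u hu
        rw [SimpleGraph.mem_neighborFinset] at hu
        have : u ∉ S := fun huS => hstable v hv u huS hu
        simp [hχdef, this]
      rw [h2, mul_zero]
    · simp [hχdef, hv]
  have hL2 : ∑ w, (A *ᵥ χ) w = d * s := by
    have h1 : (fun _ => (1:ℝ)) ⬝ᵥ (A *ᵥ χ) = ((fun _ => (1:ℝ)) ᵥ* A) ⬝ᵥ χ :=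
      dotProduct_mulVec _ _ _
    have h2 : ∀ w, ((fun _ => (1:ℝ)) ᵥ* A) w = d := by
      intro w
      rw [hAdef, SimpleGraph.adjMatrix_vecMul_apply]
      have h3 : (G.neighborFinset w).card = d := hd w
      simp [h3]
    calc ∑ w, (A *ᵥ χ) w = (fun _ => (1:ℝ)) ⬝ᵥ (A *ᵥ χ) := by
          simp [dotProduct]
      _ = ((fun _ => (1:ℝ)) ᵥ* A) ⬝ᵥ χ := h1
      _ = ∑ w, (d:ℝ) * χ w := by
          rw [dotProduct]
          exact Finset.sum_congr rfl fun w _ => by rw [h2]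
      _ = d * s := by rw [← Finset.mul_sum, hχsum]
  have hA1 : A *ᵥ (fun _ => (1:ℝ)) = fun _ => (d:ℝ) := by
    ext w
    rw [hAdef, SimpleGraph.adjMatrix_mulVec_apply]
    have h3 : (G.neighborFinset w).card = d := hd w
    simp [h3]
  have hAφ : ∀ w, (A *ᵥ φ) w = (A *ᵥ χ) w - d * α := by
    intro w
    have hφeq : φ = χ - α • (fun _ => (1:ℝ)) := by
      ext z; simp [hφdef]
    rw [hφeq, Matrix.mulVec_sub, Matrix.mulVec_smul, hA1]
    simp [mul_comm]
  have hQ2 : φ ⬝ᵥ (A *ᵥ φ) = -(2*(d*(α*s))) + d*(α*(α*n)) := by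
    have hterm : ∀ w, φ w * (A *ᵥ φ) w =
        χ w * (A *ᵥ χ) w - α * (A *ᵥ χ) w - (d*α) * χ w + α*(d*α) := by
      intro w
      rw [hAφ w, hφdef]
      ring
    rw [dotProduct, Finset.sum_congr rfl fun w _ => hterm w]
    rw [Finset.sum_add_distrib, Finset.sum_sub_distrib, Finset.sum_sub_distrib,
      ← Finset.mul_sum, ← Finset.mul_sum]
    have hc : ∑ _w : V, α*((d:ℝ)*α) = n * (α*(d*α)) := by
      rw [Finset.sum_const, Finset.card_univ, nsmul_eq_mul, hndef]
    rw [hc, hL2, hχsum]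
    have : χ ⬝ᵥ (A *ᵥ χ) = ∑ w, χ w * (A *ᵥ χ) w := rfl
    rw [← this, hL1]
    ring
  have hQ1 : φ ⬝ᵥ φ = s - 2*(α*s) + α*(α*n) := by
    have hterm : ∀ w, φ w * φ w = χ w - 2*α*χ w + α*α := by
      intro w
      rw [hφdef]
      by_cases hw : w ∈ S <;> simp [hχdef, hw] <;> ring
    rw [dotProduct, Finset.sum_congr rfl fun w _ => hterm w]
    rw [Finset.sum_add_distrib, Finset.sum_sub_distrib, ← Finset.mul_sum, hχsum]
    have hc : ∑ _w : V, α*α = n * (α*α) := by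
      rw [Finset.sum_const, Finset.card_univ, nsmul_eq_mul, hndef]
    rw [hc]
    ring
  have hdinv : (d:ℝ)⁻¹ * d = 1 := inv_mul_cancel₀ (ne_of_gt hd0')
  have hq : φ ⬝ᵥ (B *ᵥ φ) = 0 := by
    rw [hBmul, dotProduct_sub, dotProduct_smul, hMdef,
      Matrix.smul_mulVec, dotProduct_smul, smul_eq_mul, smul_eq_mul]
    rw [show ((G.adjMatrix ℝ) : Matrix V V ℝ) = A from rfl, hQ2, hQ1]
    linear_combination (-(2*(α*s)) + α*(α*n)) * hdinv + (α - lam*α) * hαn - s * hrel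
  have hBφ : B *ᵥ φ = 0 := (hBpsd.dotProduct_mulVec_zero_iff φ).mp (by simpa using hq)
  have hMφ : M *ᵥ φ = lam • φ := by
    rw [hBmul] at hBφ
    exact sub_eq_zero.mp hBφ
  have hsum0 : ∑ v, φ v = 0 := by
    simp only [hφdef]
    rw [Finset.sum_sub_distrib, hχsum, Finset.sum_const, Finset.card_univ, nsmul_eq_mul]
    rw [← hndef]
    linarith [hαn]
  have hsumS : ∑ x ∈ S, φ x = s * (1 - α) := by
    have : ∀ x ∈ S, φ x = 1 - α := by
      intro x hx
      simp [hφdef, hχdef, hx]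
    rw [Finset.sum_congr rfl this, Finset.sum_const, nsmul_eq_mul, ← hsdef]
  have hs_pos : 0 < s := by nlinarith [hαn]
  refine ⟨⟨α, φ, hMφ, fun x => ?_⟩, φ, hMφ, hsum0, ?_⟩
  · simp only [hφdef, hχdef]
    ring
  · rw [hsumS]
    have h : 0 < s * (1 - α) := by nlinarith
    exact ne_of_gt h
end

section
/- Let G be a d-regular graph on n vertices and let ∅ ≠ W ⊊ V satisfy the Cheeger bound with equality: n|E(W, V∖W)|/(d|W||V∖W|) = 1 − λ_2, where λ_2 is the second-largest eigenvalue of A/d. Then 𝟙_W is a linear combination of 𝟙 and an eigenvector of A/d with eigenvalue λ_2, and hence W cannot integrate the λ_2-eigenspace. -/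
open Matrix Finset

lemma dot_symm' {V : Type*} [Fintype V] (M : Matrix V V ℝ) (hs : Mᵀ = M) (x y : V → ℝ) :
    x ⬝ᵥ (M *ᵥ y) = (M *ᵥ x) ⬝ᵥ y := by
  rw [Matrix.dotProduct_mulVec, ← Matrix.mulVec_transpose, hs]

lemma herm_of_symm' {V : Type*} [Fintype V] (M : Matrix V V ℝ) (hs : Mᵀ = M) : M.IsHermitian := by
  rw [Matrix.IsHermitian, Matrix.conjTranspose]
  ext i j
  have := congrFun (congrFun hs i) j
  simpa using this

lemma parseval' {V : Type*} [Fintype V] [DecidableEq V]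
    (b : OrthonormalBasis V ℝ (EuclideanSpace ℝ V)) (x z : V → ℝ) :
    ∑ i, ((⇑(b i) : V → ℝ) ⬝ᵥ x) * ((⇑(b i) : V → ℝ) ⬝ᵥ z) = x ⬝ᵥ z := by
  have hp := b.sum_inner_mul_inner ((WithLp.equiv 2 (V → ℝ)).symm x) ((WithLp.equiv 2 (V → ℝ)).symm z)
  simp only [PiLp.inner_apply, RCLike.inner_apply, conj_trivial, WithLp.equiv_symm_apply, WithLp.ofLp_toLp] at hp
  simp only [dotProduct]
  have hxz : ∑ v, x v * z v = ∑ v, z v * x v := Finset.sum_congr rfl (fun v _ => mul_comm _ _)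
  rw [hxz, ← hp]
  apply Finset.sum_congr rfl
  intro i _
  congr 1
  all_goals apply Finset.sum_congr rfl; intro v _; ring

lemma rayleigh' {V : Type*} [Fintype V] [DecidableEq V] [Nonempty V]
    (B : Matrix V V ℝ) (hs : Bᵀ = B)
    (hone : B *ᵥ (fun _ => (1:ℝ)) = fun _ => 1) (lam2 : ℝ)
    (hmax : ∀ (μ : ℝ) (ψ : V → ℝ), ψ ≠ 0 → (∑ v, ψ v = 0) → B *ᵥ ψ = μ • ψ → μ ≤ lam2)
    (y : V → ℝ) (hy : ∑ v, y v = 0) :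
    y ⬝ᵥ (B *ᵥ y) ≤ lam2 * (y ⬝ᵥ y) := by
  have hnpos : (0:ℝ) < (Fintype.card V : ℝ) := by exact_mod_cast Fintype.card_pos
  set n : ℝ := (Fintype.card V : ℝ) with hn
  set J : Matrix V V ℝ := Matrix.of (fun _ _ => 1) with hJ
  set C : Matrix V V ℝ := B - n⁻¹ • J with hC
  have hCmul : ∀ x : V → ℝ, C *ᵥ x = B *ᵥ x - (n⁻¹ * ∑ v, x v) • (fun _ => (1:ℝ)) := by
    intro x
    rw [hC, Matrix.sub_mulVec, Matrix.smul_mulVec]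
    congr 1
    ext i
    simp [hJ, Matrix.mulVec, dotProduct, mul_comm]
  have hJt : Jᵀ = J := by ext i j; simp [hJ]
  have hCs : Cᵀ = C := by rw [hC, Matrix.transpose_sub, hs, Matrix.transpose_smul, hJt]
  have hCone : C *ᵥ (fun _ => (1:ℝ)) = 0 := by
    rw [hCmul, hone]
    ext i
    simp [inv_mul_cancel₀ (ne_of_gt hnpos), ← hn]
  have hCzero : ∀ x : V → ℝ, (∑ v, x v = 0) → C *ᵥ x = B *ᵥ x := by
    intro x hx
    rw [hCmul, hx]
    simp
  have hherm : C.IsHermitian := herm_of_symm' C hCs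
  set b := hherm.eigenvectorBasis with hb
  set μ := hherm.eigenvalues with hμ
  set e : V → (V → ℝ) := fun i => (⇑(b i) : V → ℝ) with he
  have heigen : ∀ i, C *ᵥ e i = μ i • e i := fun i => hherm.mulVec_eigenvectorBasis i
  set c : V → ℝ := fun i => e i ⬝ᵥ y with hcdef
  have hsum0 : ∀ i, μ i ≠ 0 → ∑ v, e i v = 0 := by
    intro i hμi
    have h1 : (fun _ => (1:ℝ)) ⬝ᵥ (C *ᵥ e i) = μ i * ∑ v, e i v := by
      rw [heigen i, dotProduct_smul]
      simp [dotProduct, mul_sum]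
    have h2 : (fun _ => (1:ℝ)) ⬝ᵥ (C *ᵥ e i) = 0 := by
      rw [dot_symm' C hCs, hCone, zero_dotProduct]
    exact (mul_eq_zero.1 (h1.symm.trans h2)).resolve_left hμi
  have hne : ∀ i, e i ≠ (0 : V → ℝ) := by
    intro i h
    apply b.orthonormal.ne_zero i
    ext v
    exact congrFun h v
  have hBe : ∀ i, (∑ v, e i v = 0) → B *ᵥ e i = μ i • e i := by
    intro i hsum
    rw [← hCzero (e i) hsum, heigen i]
  have hkey : ∀ i, μ i * (c i)^2 ≤ lam2 * (c i)^2 := by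
    intro i
    by_cases hμi : μ i = 0
    · rw [hμi, zero_mul]
      rcases le_or_gt 0 lam2 with h | h
      · positivity
      · set s : ℝ := ∑ v, e i v with hsdef
        set f : V → ℝ := fun v => e i v - s / n with hfdef
        have hfsum : ∑ v, f v = 0 := by
          simp only [hfdef, Finset.sum_sub_distrib, ← hsdef, Finset.sum_const, card_univ,
            nsmul_eq_mul]
          field_simp
          rw [← hn]; ring
        have hfeq : f = e i - (s/n) • (fun _ => (1:ℝ)) := by ext v; simp [hfdef]
        have hCf : C *ᵥ f = 0 := by
          rw [hfeq, Matrix.mulVec_sub, Matrix.mulVec_smul, heigen i, hCone, hμi]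
          simp
        have hBf : B *ᵥ f = (0:ℝ) • f := by
          rw [← hCzero f hfsum, hCf, zero_smul]
        by_cases hf0 : f = 0
        · have hbi : ∀ v, e i v = s / n := by
            intro v
            have := congrFun hf0 v
            simp only [hfdef, Pi.zero_apply] at this
            linarith
          have hci : c i = 0 := by
            simp only [hcdef, dotProduct]
            calc ∑ v, e i v * y v = ∑ v, (s/n) * y v :=
                  Finset.sum_congr rfl (fun v _ => by rw [hbi v])
            _ = (s/n) * ∑ v, y v := by rw [Finset.mul_sum]
            _ = 0 := by rw [hy, mul_zero]
          rw [hci]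
          simp
        · exact absurd (hmax 0 f hf0 hfsum hBf) (by linarith)
    · have := hmax (μ i) (e i) (hne i) (hsum0 i hμi) (hBe i (hsum0 i hμi))
      nlinarith [sq_nonneg (c i)]
  have hexp : y ⬝ᵥ (C *ᵥ y) = ∑ i, μ i * (c i)^2 := by
    rw [← parseval' b y (C *ᵥ y)]
    apply Finset.sum_congr rfl
    intro i _
    rw [dot_symm' C hCs, heigen i, smul_dotProduct]
    show (e i ⬝ᵥ y) * (μ i * (e i ⬝ᵥ y)) = μ i * (c i)^2
    ring
  have hnorm : y ⬝ᵥ y = ∑ i, (c i)^2 := by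
    rw [← parseval' b y y]
    exact Finset.sum_congr rfl (fun i _ => by show (e i ⬝ᵥ y) * (e i ⬝ᵥ y) = (c i)^2; ring)
  calc y ⬝ᵥ (B *ᵥ y) = y ⬝ᵥ (C *ᵥ y) := by rw [hCzero y hy]
  _ = ∑ i, μ i * (c i)^2 := hexp
  _ ≤ ∑ i, lam2 * (c i)^2 := Finset.sum_le_sum (fun i _ => hkey i)
  _ = lam2 * (y ⬝ᵥ y) := by rw [hnorm, Finset.mul_sum]

lemma eigen_of_eq' {V : Type*} [Fintype V] [DecidableEq V] [Nonempty V]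
    (B : Matrix V V ℝ) (hs : Bᵀ = B)
    (hone : B *ᵥ (fun _ => (1:ℝ)) = fun _ => 1) (lam2 : ℝ)
    (hmax : ∀ (μ : ℝ) (ψ : V → ℝ), ψ ≠ 0 → (∑ v, ψ v = 0) → B *ᵥ ψ = μ • ψ → μ ≤ lam2)
    (φ : V → ℝ) (hφsum : ∑ v, φ v = 0)
    (heq : φ ⬝ᵥ (B *ᵥ φ) = lam2 * (φ ⬝ᵥ φ)) : B *ᵥ φ = lam2 • φ := by
  set r : V → ℝ := B *ᵥ φ - lam2 • φ with hr
  have hBφ : B *ᵥ φ = lam2 • φ + r := by ext v; simp [hr]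
  have hsumBφ : ∑ v, (B *ᵥ φ) v = 0 := by
    have h1 : ∑ v, (B *ᵥ φ) v = (fun _ => (1:ℝ)) ⬝ᵥ (B *ᵥ φ) := by
      simp [dotProduct]
    rw [h1, dot_symm' B hs, hone]
    simpa [dotProduct] using hφsum
  have hrsum : ∑ v, r v = 0 := by
    simp only [hr, Pi.sub_apply, Pi.smul_apply, smul_eq_mul, Finset.sum_sub_distrib,
      ← Finset.mul_sum, hφsum, hsumBφ]
    ring
  have hφr : φ ⬝ᵥ r = 0 := by
    simp only [hr, dotProduct_sub, dotProduct_smul, smul_eq_mul]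
    rw [heq]
    ring
  set R2 : ℝ := r ⬝ᵥ r with hR2def
  set K : ℝ := lam2 * R2 - r ⬝ᵥ (B *ᵥ r) with hKdef
  have hφBr : φ ⬝ᵥ (B *ᵥ r) = R2 := by
    rw [dot_symm' B hs, hBφ, add_dotProduct, smul_dotProduct, hφr]
    simp [hR2def]
  have hrBφ : r ⬝ᵥ (B *ᵥ φ) = R2 := by
    rw [hBφ, dotProduct_add, dotProduct_smul, dotProduct_comm r φ, hφr]
    simp [hR2def]
  have hineq : ∀ t : ℝ, 2 * t * R2 ≤ t^2 * K := by
    intro t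
    have hysum : ∑ v, (φ + t • r) v = 0 := by
      simp [Finset.sum_add_distrib, ← Finset.mul_sum, hφsum, hrsum]
    have h := rayleigh' B hs hone lam2 hmax (φ + t • r) hysum
    simp only [Matrix.mulVec_add, Matrix.mulVec_smul, dotProduct_add,
      add_dotProduct, dotProduct_smul, smul_dotProduct,
      smul_eq_mul] at h
    rw [heq, hφBr, hrBφ, hφr, dotProduct_comm r φ, hφr] at h
    rw [hKdef]
    nlinarith [h]
  have hR2zero : R2 = 0 := by
    by_contra hne0
    have hR2nn : 0 ≤ R2 := by
      rw [hR2def, dotProduct]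
      exact Finset.sum_nonneg fun v _ => mul_self_nonneg _
    have hR2pos : 0 < R2 := lt_of_le_of_ne hR2nn (Ne.symm hne0)
    set t0 : ℝ := R2 / (|K| + 1) with ht0
    have habs : (0:ℝ) < |K| + 1 := by positivity
    have ht0pos : 0 < t0 := div_pos hR2pos habs
    have ht0eq : t0 * (|K| + 1) = R2 := by rw [ht0, div_mul_cancel₀ _ (ne_of_gt habs)]
    have hKabs : K ≤ |K| := le_abs_self K
    have h := hineq t0
    nlinarith [sq_nonneg t0, mul_pos ht0pos hR2pos]
  have hrz : r = 0 := by
    rwa [hR2def, dotProduct_self_eq_zero] at hR2zero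
  ext v
  have := congrFun hrz v
  simp only [hr, Pi.sub_apply, Pi.zero_apply] at this
  linarith [this]

/-- Cheeger-bound tightness. Let `G` be a `d`-regular graph on `n`
vertices, `lam2` the second-largest eigenvalue of `A/d` (the largest eigenvalue on
the orthogonal complement of `𝟙`), and `∅ ≠ W ⊊ V` a subset attaining the Cheeger
bound `n·|E(W, V∖W)| / (d·|W|·|V∖W|) = 1 − lam2`. Then `𝟙_W` is a linear
combination of `𝟙` and an eigenvector of `A/d` with eigenvalue `lam2`, and hence
`W` cannot integrate the `lam2`-eigenspace. -/
theorem stmt16 {V : Type*} [Fintype V] [DecidableEq V]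
    (G : SimpleGraph V) [DecidableRel G.Adj]
    (d : ℕ) (hd : G.IsRegularOfDegree d) (hd0 : 0 < d) (lam2 : ℝ)
    (hmax : ∀ (μ : ℝ) (ψ : V → ℝ), ψ ≠ 0 → (∑ v, ψ v = 0) →
      ((d : ℝ)⁻¹ • G.adjMatrix ℝ).mulVec ψ = μ • ψ → μ ≤ lam2)
    (heig : ∃ ψ : V → ℝ, ψ ≠ 0 ∧ (∑ v, ψ v = 0) ∧
      ((d : ℝ)⁻¹ • G.adjMatrix ℝ).mulVec ψ = lam2 • ψ)
    (W : Finset V) (hW : W.Nonempty) (hWproper : W ≠ Finset.univ)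
    (hcheeg : (Fintype.card V : ℝ) *
        (∑ u ∈ W, ∑ v ∈ Wᶜ, if G.Adj u v then (1 : ℝ) else 0)
        / ((d : ℝ) * (W.card : ℝ) * ((Wᶜ : Finset V).card : ℝ)) = 1 - lam2) :
    (∃ (c : ℝ) (φ : V → ℝ),
        ((d : ℝ)⁻¹ • G.adjMatrix ℝ).mulVec φ = lam2 • φ ∧
        ∀ x, (if x ∈ W then (1 : ℝ) else 0) = c + φ x) ∧
    ∃ φ : V → ℝ,
      ((d : ℝ)⁻¹ • G.adjMatrix ℝ).mulVec φ = lam2 • φ ∧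
      (∑ v, φ v = 0) ∧ ∑ x ∈ W, φ x ≠ 0 := by
  have : Nonempty V := ⟨hW.choose⟩
  have hnpos : (0:ℝ) < (Fintype.card V : ℝ) := by exact_mod_cast Fintype.card_pos
  set n : ℝ := (Fintype.card V : ℝ) with hn
  set B : Matrix V V ℝ := (d : ℝ)⁻¹ • G.adjMatrix ℝ with hB
  have hdR : (0:ℝ) < (d:ℝ) := by exact_mod_cast hd0
  have hs : Bᵀ = B := by
    rw [hB, Matrix.transpose_smul, SimpleGraph.transpose_adjMatrix]
  have hone : B *ᵥ (fun _ => (1:ℝ)) = fun _ => 1 := by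
    ext v
    rw [hB, Matrix.smul_mulVec]
    simp only [Pi.smul_apply, smul_eq_mul]
    rw [SimpleGraph.adjMatrix_mulVec_apply]
    simp only [Finset.sum_const, nsmul_eq_mul, mul_one]
    rw [show (G.neighborFinset v).card = G.degree v from rfl, hd v]
    exact inv_mul_cancel₀ (ne_of_gt hdR)
  have hWcard : (0:ℝ) < (W.card : ℝ) := by exact_mod_cast hW.card_pos
  have hWc : ((Wᶜ : Finset V).card : ℝ) = n - W.card := by
    rw [Finset.card_compl]
    push_cast [Finset.card_le_univ W]
    simp [hn]
  have hWlt' : W.card < Fintype.card V := by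
    rw [← Finset.card_univ]
    exact Finset.card_lt_card (Finset.ssubset_univ_iff.2 hWproper)
  have hWlt : (W.card : ℝ) < n := by
    rw [hn]
    exact_mod_cast hWlt'
  set er : ℝ := ∑ u ∈ W, ∑ v ∈ Wᶜ, if G.Adj u v then (1 : ℝ) else 0 with her
  set c : ℝ := (W.card : ℝ) / n with hc
  set ind : V → ℝ := fun x => if x ∈ W then (1:ℝ) else 0 with hind
  set φ : V → ℝ := fun x => ind x - c with hφ
  have hsumind : ∑ v, ind v = (W.card : ℝ) := by
    simp [hind, Finset.sum_ite_mem]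
  have hφsum : ∑ v, φ v = 0 := by
    simp only [hφ, Finset.sum_sub_distrib, hsumind, Finset.sum_const, card_univ, nsmul_eq_mul]
    rw [hc]
    field_simp
    rw [← hn]; ring
  have hN : φ ⬝ᵥ φ = (W.card : ℝ) * (n - W.card) / n := by
    simp only [hφ, hind, dotProduct]
    have key : ∀ v : V, ((if v ∈ W then (1:ℝ) else 0) - c) * ((if v ∈ W then (1:ℝ) else 0) - c)
        = (if v ∈ W then (1:ℝ) else 0) - 2*c*(if v ∈ W then (1:ℝ) else 0) + c^2 := by
      intro v; by_cases h : v ∈ W <;> simp [h] <;> ring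
    rw [Finset.sum_congr rfl (fun v _ => key v)]
    simp only [Finset.sum_add_distrib, Finset.sum_sub_distrib, ← Finset.mul_sum,
      Finset.sum_const, card_univ, nsmul_eq_mul]
    have h1 : ∑ v, (if v ∈ W then (1:ℝ) else 0) = (W.card : ℝ) := by
      simp [Finset.sum_ite_mem]
    rw [h1, hc]
    field_simp
    ring
  have hsum_ind_mul : ∀ g : V → ℝ, ∑ u, ind u * g u = ∑ u ∈ W, g u := by
    intro g
    simp only [hind, ite_mul, one_mul, zero_mul, Finset.sum_ite_mem, Finset.univ_inter]
  have hsum_mul_ind : ∀ g : V → ℝ, ∑ u, g u * ind u = ∑ u ∈ W, g u := by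
    intro g
    simp only [hind, mul_ite, mul_one, mul_zero, Finset.sum_ite_mem, Finset.univ_inter]
  have hrow : ∀ u : V, ∑ v, (if G.Adj u v then (1:ℝ) else 0) = (d : ℝ) := by
    intro u
    rw [Finset.sum_boole]
    have h1 : Finset.filter (fun v => G.Adj u v) Finset.univ = G.neighborFinset u := by
      ext v; simp [SimpleGraph.neighborFinset, SimpleGraph.mem_neighborSet]
    rw [h1, show (G.neighborFinset u).card = G.degree u from rfl, hd u]
  have hA : ind ⬝ᵥ (G.adjMatrix ℝ *ᵥ ind) = (d:ℝ) * W.card - er := by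
    rw [dotProduct]
    rw [hsum_ind_mul (fun u => (G.adjMatrix ℝ *ᵥ ind) u)]
    have h2 : ∀ u : V, (G.adjMatrix ℝ *ᵥ ind) u = ∑ v ∈ W, if G.Adj u v then (1:ℝ) else 0 := by
      intro u
      rw [Matrix.mulVec, dotProduct]
      have : ∀ v : V, G.adjMatrix ℝ u v * ind v = (if G.Adj u v then (1:ℝ) else 0) * ind v := by
        intro v; rw [SimpleGraph.adjMatrix_apply]
      rw [Finset.sum_congr rfl (fun v _ => this v),
        hsum_mul_ind (fun v => if G.Adj u v then (1:ℝ) else 0)]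
    rw [Finset.sum_congr rfl (fun u _ => h2 u)]
    have h3 : ∀ u : V, ∑ v ∈ W, (if G.Adj u v then (1:ℝ) else 0)
        = (d:ℝ) - ∑ v ∈ Wᶜ, (if G.Adj u v then (1:ℝ) else 0) := by
      intro u
      have := Finset.sum_add_sum_compl W (fun v => if G.Adj u v then (1:ℝ) else 0)
      rw [hrow u] at this
      linarith
    rw [Finset.sum_congr rfl (fun u _ => h3 u)]
    rw [Finset.sum_sub_distrib, Finset.sum_const, nsmul_eq_mul, ← her]
    ring
  have hT : ind ⬝ᵥ (B *ᵥ ind) = (W.card:ℝ) - er / d := by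
    rw [hB, Matrix.smul_mulVec, dotProduct_smul, smul_eq_mul, hA]
    field_simp
  have hφeq : φ = ind - c • (fun _ => (1:ℝ)) := by ext v; simp [hφ]
  have hφ1 : φ ⬝ᵥ (fun _ => (1:ℝ)) = 0 := by
    simpa [dotProduct] using hφsum
  have honeBind : (fun _ => (1:ℝ)) ⬝ᵥ (B *ᵥ ind) = (W.card : ℝ) := by
    rw [dot_symm' B hs, hone]
    simpa [dotProduct] using hsumind
  have hQ : φ ⬝ᵥ (B *ᵥ φ) = φ ⬝ᵥ φ - er / d := by
    have hBφ2 : B *ᵥ φ = B *ᵥ ind - c • (fun _ => (1:ℝ)) := by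
      rw [hφeq, Matrix.mulVec_sub, Matrix.mulVec_smul, hone]
    rw [hBφ2, dotProduct_sub, dotProduct_smul, smul_eq_mul, hφ1, mul_zero, sub_zero]
    nth_rewrite 1 [hφeq]
    rw [sub_dotProduct, smul_dotProduct, smul_eq_mul, honeBind, hT, hN]
    have hcW : c * (W.card : ℝ) = (W.card:ℝ) * W.card / n := by rw [hc]; ring
    rw [hcW]
    field_simp
    ring
  have hden : (d:ℝ) * (W.card : ℝ) * ((Wᶜ : Finset V).card : ℝ) ≠ 0 := by
    rw [hWc]
    have : (0:ℝ) < n - W.card := by linarith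
    positivity
  rw [div_eq_iff hden, hWc] at hcheeg
  have heq : φ ⬝ᵥ (B *ᵥ φ) = lam2 * (φ ⬝ᵥ φ) := by
    rw [hQ, hN]
    have hn0 : n ≠ 0 := ne_of_gt hnpos
    have hd0' : (d:ℝ) ≠ 0 := ne_of_gt hdR
    field_simp
    linear_combination (-1) * hcheeg
  have heigvec : B *ᵥ φ = lam2 • φ := eigen_of_eq' B hs hone lam2 hmax φ hφsum heq
  have hsumWφ : ∑ x ∈ W, φ x = (W.card : ℝ) * (n - W.card) / n := by
    have h1 : ∀ x ∈ W, φ x = 1 - c := by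
      intro x hx; simp [hφ, hind, hx]
    rw [Finset.sum_congr rfl h1, Finset.sum_const, nsmul_eq_mul, hc]
    field_simp
    try ring
  constructor
  · refine ⟨c, φ, heigvec, fun x => ?_⟩
    simp [hφ, hind]
  · refine ⟨φ, heigvec, hφsum, ?_⟩
    rw [hsumWφ]
    have h2 : (0:ℝ) < (W.card : ℝ) * (n - W.card) / n := by
      have : (0:ℝ) < n - W.card := by linarith
      positivity
    exact ne_of_gt h2
end
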